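/- Let n ≥ 2 be an integer, H ∈ ℝ, C > 0, and suppose 0 < t₁ < t₂ are such that the polynomial ξ(s) = C·s^{2n−2} − 1 − (1+H²)s^{2n} − 2H·s^{n} satisfies ξ(t₁) = ξ(t₂) = 0, ξ(s) > 0 for all s ∈ (t₁, t₂), ξ′(t₁) ≠ 0 and ξ′(t₂) ≠ 0. Set T = 2·∫_{t₁}^{t₂} t^{n−1}/√(ξ(t)) dt (a finite improper integral). Then there exists a continuously differentiable, T-periodic function g : ℝ → [t₁, t₂] with g(0) = t₁, g(T/2) = t₂, g strictly increasing on [0, T/2], which satisfies (g′(u))² + g(u)^{2−2n} + (1+H²)·g(u)² + 2H·g(u)^{2−n} = C for all u ∈ ℝ. -/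

import Mathlib

open Real Set MeasureTheory intervalIntegral Filter Topology

set_option maxHeartbeats 1600000

theorem stmt_5 (n : ℕ) (hn : 2 ≤ n) (H C : ℝ) (hC : 0 < C)
    (t₁ t₂ : ℝ) (ht₁ : 0 < t₁) (h12 : t₁ < t₂)
    (ξ : ℝ → ℝ)
    (hξ : ξ = fun s : ℝ => C * s ^ (2 * n - 2) - 1 - (1 + H ^ 2) * s ^ (2 * n)
      - 2 * H * s ^ n)
    (hz1 : ξ t₁ = 0) (hz2 : ξ t₂ = 0)
    (hpos : ∀ s ∈ Set.Ioo t₁ t₂, 0 < ξ s)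
    (hd1 : deriv ξ t₁ ≠ 0) (hd2 : deriv ξ t₂ ≠ 0)
    (T : ℝ)
    (hT : T = 2 * ∫ t in t₁..t₂, t ^ (n - 1) / Real.sqrt (ξ t)) :
    ∃ g : ℝ → ℝ, ContDiff ℝ 1 g ∧ Function.Periodic g T ∧
      (∀ u, g u ∈ Set.Icc t₁ t₂) ∧ g 0 = t₁ ∧ g (T / 2) = t₂ ∧
      StrictMonoOn g (Set.Icc 0 (T / 2)) ∧
      ∀ u, (deriv g u) ^ 2 + (g u) ^ (2 - 2 * (n : ℤ)) + (1 + H ^ 2) * (g u) ^ 2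
        + 2 * H * (g u) ^ (2 - (n : ℤ)) = C := by
  set F : ℝ → ℝ := fun t => t ^ (n - 1) / Real.sqrt (ξ t) with hFdef
  have hξc : Continuous ξ := by rw [hξ]; fun_prop
  have hξd : Differentiable ℝ ξ := by rw [hξ]; fun_prop
  have ht₂ : 0 < t₂ := ht₁.trans h12
  have hξnn : ∀ x ∈ Icc t₁ t₂, 0 ≤ ξ x := by
    rintro x ⟨hx1, hx2⟩
    rcases eq_or_lt_of_le hx1 with h | h
    · rw [← h, hz1]
    rcases eq_or_lt_of_le hx2 with h' | h'
    · rw [h', hz2]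
    exact (hpos x ⟨h, h'⟩).le
  -- simple zeros: signs of the derivative
  have hd1pos : 0 < deriv ξ t₁ := by
    have hder : HasDerivAt ξ (deriv ξ t₁) t₁ := (hξd t₁).hasDerivAt
    have hts : Tendsto (slope ξ t₁) (𝓝[>] t₁) (𝓝 (deriv ξ t₁)) :=
      (hasDerivAt_iff_tendsto_slope.mp hder).mono_left
        (nhdsWithin_mono _ fun x hx => ne_of_gt hx)
    have hev : ∀ᶠ x in 𝓝[>] t₁, 0 ≤ slope ξ t₁ x := by
      filter_upwards [self_mem_nhdsWithin,
        mem_nhdsWithin_of_mem_nhds (Iio_mem_nhds h12)] with x hx hx2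
      have hx1 : t₁ < x := hx
      rw [slope_def_field, hz1, sub_zero]
      exact div_nonneg (hpos x ⟨hx1, hx2⟩).le (by linarith)
    have h0 : 0 ≤ deriv ξ t₁ := ge_of_tendsto hts hev
    exact lt_of_le_of_ne h0 (Ne.symm hd1)
  have hd2neg : deriv ξ t₂ < 0 := by
    have hder : HasDerivAt ξ (deriv ξ t₂) t₂ := (hξd t₂).hasDerivAt
    have hts : Tendsto (slope ξ t₂) (𝓝[<] t₂) (𝓝 (deriv ξ t₂)) :=
      (hasDerivAt_iff_tendsto_slope.mp hder).mono_left
        (nhdsWithin_mono _ fun x hx => ne_of_lt hx)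
    have hev : ∀ᶠ x in 𝓝[<] t₂, slope ξ t₂ x ≤ 0 := by
      filter_upwards [self_mem_nhdsWithin,
        mem_nhdsWithin_of_mem_nhds (Ioi_mem_nhds h12)] with x hx hx2
      have hx' : x < t₂ := hx
      rw [slope_def_field, hz2, sub_zero]
      exact div_nonpos_of_nonneg_of_nonpos (hpos x ⟨hx2, hx'⟩).le (by linarith)
    have h0 : deriv ξ t₂ ≤ 0 := le_of_tendsto hts hev
    exact lt_of_le_of_ne h0 hd2
  -- continuity and positivity of F on the open interval
  have hFca : ∀ s ∈ Ioo t₁ t₂, ContinuousAt F s := by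
    intro s hs
    have h1 : Real.sqrt (ξ s) ≠ 0 := ne_of_gt (Real.sqrt_pos.mpr (hpos s hs))
    rw [hFdef]
    exact ContinuousAt.div ((continuous_pow (n - 1)).continuousAt)
      (Real.continuous_sqrt.continuousAt.comp (hξc.continuousAt)) h1
  have hFcont : ContinuousOn F (Ioo t₁ t₂) := fun s hs => (hFca s hs).continuousWithinAt
  have hFnonneg : ∀ t : ℝ, 0 ≤ t → 0 ≤ F t := fun t ht =>
    div_nonneg (pow_nonneg ht _) (Real.sqrt_nonneg _)
  have hFpos : ∀ t ∈ Ioo t₁ t₂, 0 < F t := fun t ht =>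
    div_pos (pow_pos (ht₁.trans ht.1) _) (Real.sqrt_pos.mpr (hpos t ht))
  -- integrability of F
  have hFint : IntervalIntegrable F volume t₁ t₂ := by
    -- near t₁
    obtain ⟨c₁, hc₁, hIoo1⟩ : ∃ c₁ ∈ Ioi t₁, Ioo t₁ c₁ ⊆
        {x | deriv ξ t₁ / 2 * (x - t₁) ≤ ξ x} ∩ Iio t₂ := by
      apply mem_nhdsGT_iff_exists_Ioo_subset.mp
      apply inter_mem ?_ (mem_nhdsWithin_of_mem_nhds (Iio_mem_nhds h12))
      have hder : HasDerivAt ξ (deriv ξ t₁) t₁ := (hξd t₁).hasDerivAt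
      have hts : Tendsto (slope ξ t₁) (𝓝[>] t₁) (𝓝 (deriv ξ t₁)) :=
        (hasDerivAt_iff_tendsto_slope.mp hder).mono_left
          (nhdsWithin_mono _ fun x hx => ne_of_gt hx)
      have hev : ∀ᶠ x in 𝓝[>] t₁, deriv ξ t₁ / 2 < slope ξ t₁ x :=
        hts.eventually (eventually_gt_nhds (by linarith))
      filter_upwards [hev, self_mem_nhdsWithin] with x hx hx1
      have hx1' : t₁ < x := hx1
      rw [slope_def_field, hz1, sub_zero] at hx
      exact le_of_lt ((lt_div_iff₀ (by linarith)).mp hx)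
    -- near t₂
    obtain ⟨c₂, hc₂, hIoo2⟩ : ∃ c₂ ∈ Iio t₂, Ioo c₂ t₂ ⊆
        {x | -(deriv ξ t₂) / 2 * (t₂ - x) ≤ ξ x} ∩ Ioi t₁ := by
      apply mem_nhdsLT_iff_exists_Ioo_subset.mp
      apply inter_mem ?_ (mem_nhdsWithin_of_mem_nhds (Ioi_mem_nhds h12))
      have hder : HasDerivAt ξ (deriv ξ t₂) t₂ := (hξd t₂).hasDerivAt
      have hts : Tendsto (slope ξ t₂) (𝓝[<] t₂) (𝓝 (deriv ξ t₂)) :=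
        (hasDerivAt_iff_tendsto_slope.mp hder).mono_left
          (nhdsWithin_mono _ fun x hx => ne_of_lt hx)
      have hev : ∀ᶠ x in 𝓝[<] t₂, slope ξ t₂ x < deriv ξ t₂ / 2 :=
        hts.eventually (eventually_lt_nhds (by linarith))
      filter_upwards [hev, self_mem_nhdsWithin] with x hx hx1
      have hx1' : x < t₂ := hx1
      rw [slope_def_field, hz2, sub_zero] at hx
      have hx2 := (div_lt_iff_of_neg (by linarith : x - t₂ < 0)).mp hx
      have he : -(deriv ξ t₂) / 2 * (t₂ - x) = deriv ξ t₂ / 2 * (x - t₂) := by ring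
      show -(deriv ξ t₂) / 2 * (t₂ - x) ≤ ξ x
      rw [he]; linarith
    have hc₁' : t₁ < c₁ := hc₁
    have hc₂' : c₂ < t₂ := hc₂
    set c₁' : ℝ := min ((t₁ + c₁) / 2) ((t₁ + t₂) / 2) with hc₁'def
    set c₂' : ℝ := max ((t₂ + c₂) / 2) ((t₁ + t₂) / 2) with hc₂'def
    have hac : t₁ < c₁' := lt_min (by linarith) (by linarith)
    have hca : c₁' < c₁ := lt_of_le_of_lt (min_le_left _ _) (by linarith)
    have hcmid : c₁' ≤ (t₁ + t₂) / 2 := min_le_right _ _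
    have hbc : c₂' < t₂ := max_lt (by linarith) (by linarith)
    have hcb : c₂ < c₂' := lt_of_lt_of_le (by linarith) (le_max_left _ _)
    have hmidc : (t₁ + t₂) / 2 ≤ c₂' := le_max_right _ _
    have hc₁t₂ : c₁' < t₂ := lt_of_le_of_lt hcmid (by linarith)
    have ht₁c₂ : t₁ < c₂' := lt_of_lt_of_le (by linarith) hmidc
    have hint1 : IntervalIntegrable F volume t₁ c₁' := by
      set M : ℝ := t₂ ^ (n - 1) / Real.sqrt (deriv ξ t₁ / 2) with hMdef
      have hbint : IntervalIntegrable (fun t => M * (t - t₁) ^ (-(1/2) : ℝ)) volume t₁ c₁' := by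
        have h0 : IntervalIntegrable (fun x : ℝ => x ^ (-(1/2) : ℝ)) volume 0 (c₁' - t₁) :=
          intervalIntegrable_rpow' (by norm_num)
        have h1 := (h0.comp_sub_right t₁).const_mul M
        simpa using h1
      apply hbint.mono_fun
      · rw [uIoc_of_le hac.le,
          ← Measure.restrict_congr_set (α := ℝ) Ioo_ae_eq_Ioc]
        apply (hFcont.mono ?_).aestronglyMeasurable measurableSet_Ioo
        intro x hx; exact ⟨hx.1, lt_trans hx.2 hc₁t₂⟩
      · rw [uIoc_of_le hac.le]
        refine (ae_restrict_iff' measurableSet_Ioc).mpr (ae_of_all _ ?_)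
        intro x hx
        have hx1 : t₁ < x := hx.1
        have hx2 : x < t₂ := lt_of_le_of_lt hx.2 hc₁t₂
        have hxc : x < c₁ := lt_of_le_of_lt hx.2 hca
        have hξx := (hIoo1 ⟨hx1, hxc⟩).1
        have hxpos : (0:ℝ) < x := lt_trans ht₁ hx1
        have hFx : F x ≤ M * (x - t₁) ^ (-(1/2) : ℝ) := by
          have hs1 : Real.sqrt (deriv ξ t₁ / 2) * Real.sqrt (x - t₁) ≤ Real.sqrt (ξ x) := by
            rw [← Real.sqrt_mul (by positivity)]
            exact Real.sqrt_le_sqrt hξx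
          have hnum : x ^ (n - 1) ≤ t₂ ^ (n - 1) := pow_le_pow_left₀ hxpos.le hx2.le _
          have hden : 0 < Real.sqrt (deriv ξ t₁ / 2) * Real.sqrt (x - t₁) := by
            apply mul_pos (Real.sqrt_pos.mpr (by linarith)) (Real.sqrt_pos.mpr (by linarith))
          have e1 : Real.sqrt (deriv ξ t₁ / 2) ≠ 0 := by positivity
          have e2 : Real.sqrt (x - t₁) ≠ 0 := by
            exact ne_of_gt (Real.sqrt_pos.mpr (by linarith))
          calc F x ≤ t₂ ^ (n - 1) / (Real.sqrt (deriv ξ t₁ / 2) * Real.sqrt (x - t₁)) := by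
                rw [hFdef]
                exact div_le_div₀ (pow_nonneg ht₂.le _) hnum hden hs1
            _ = M * (x - t₁) ^ (-(1/2) : ℝ) := by
                rw [Real.rpow_neg (by linarith : (0:ℝ) ≤ x - t₁), ← Real.sqrt_eq_rpow,
                  hMdef]
                field_simp
        have hF0 : 0 ≤ F x := hFnonneg x hxpos.le
        have hB0 : (0:ℝ) ≤ M * (x - t₁) ^ (-(1/2) : ℝ) := by
          apply mul_nonneg
          · rw [hMdef]; positivity
          · exact Real.rpow_nonneg (by linarith) _
        show ‖F x‖ ≤ ‖M * (x - t₁) ^ (-(1/2) : ℝ)‖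
        rw [Real.norm_eq_abs, Real.norm_eq_abs, abs_of_nonneg hF0, abs_of_nonneg hB0]
        exact hFx
    have hint2 : IntervalIntegrable F volume c₂' t₂ := by
      set M : ℝ := t₂ ^ (n - 1) / Real.sqrt (-(deriv ξ t₂) / 2) with hMdef
      have hbint : IntervalIntegrable (fun t => M * (t₂ - t) ^ (-(1/2) : ℝ)) volume c₂' t₂ := by
        have h0 : IntervalIntegrable (fun x : ℝ => x ^ (-(1/2) : ℝ)) volume 0 (t₂ - c₂') :=
          intervalIntegrable_rpow' (by norm_num)
        have h1 := ((h0.comp_sub_left t₂).symm).const_mul M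
        simpa using h1
      apply hbint.mono_fun
      · rw [uIoc_of_le hbc.le,
          ← Measure.restrict_congr_set (α := ℝ) Ioo_ae_eq_Ioc]
        apply (hFcont.mono ?_).aestronglyMeasurable measurableSet_Ioo
        intro x hx; exact ⟨lt_trans ht₁c₂ hx.1, hx.2⟩
      · rw [uIoc_of_le hbc.le]
        refine (ae_restrict_iff' measurableSet_Ioc).mpr (ae_of_all _ ?_)
        intro x hx
        have hx1 : c₂' < x := hx.1
        have hxt₁ : t₁ < x := lt_trans ht₁c₂ hx1
        have hxpos : (0:ℝ) < x := lt_trans ht₁ hxt₁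
        rcases eq_or_lt_of_le hx.2 with heq | hlt
        · -- x = t₂ : both sides are 0
          have hFx0 : F x = 0 := by rw [heq, hFdef]; simp [hz2]
          show ‖F x‖ ≤ ‖M * (t₂ - x) ^ (-(1/2) : ℝ)‖
          rw [hFx0]
          have hB0 : (0:ℝ) ≤ M * (t₂ - x) ^ (-(1/2) : ℝ) := by
            apply mul_nonneg
            · rw [hMdef]; positivity
            · exact Real.rpow_nonneg (by linarith) _
          simp only [Real.norm_eq_abs, norm_zero, abs_of_nonneg hB0]
          exact hB0
        · have hxc : c₂ < x := lt_trans hcb hx1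
          have hξx := (hIoo2 ⟨hxc, hlt⟩).1
          have hFx : F x ≤ M * (t₂ - x) ^ (-(1/2) : ℝ) := by
            have hs1 : Real.sqrt (-(deriv ξ t₂) / 2) * Real.sqrt (t₂ - x) ≤ Real.sqrt (ξ x) := by
              rw [← Real.sqrt_mul (by linarith : (0:ℝ) ≤ -(deriv ξ t₂) / 2)]
              exact Real.sqrt_le_sqrt hξx
            have hnum : x ^ (n - 1) ≤ t₂ ^ (n - 1) := pow_le_pow_left₀ hxpos.le hlt.le _
            have hden : 0 < Real.sqrt (-(deriv ξ t₂) / 2) * Real.sqrt (t₂ - x) := by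
              apply mul_pos (Real.sqrt_pos.mpr (by linarith)) (Real.sqrt_pos.mpr (by linarith))
            calc F x ≤ t₂ ^ (n - 1) / (Real.sqrt (-(deriv ξ t₂) / 2) * Real.sqrt (t₂ - x)) := by
                  rw [hFdef]
                  exact div_le_div₀ (pow_nonneg ht₂.le _) hnum hden hs1
              _ = M * (t₂ - x) ^ (-(1/2) : ℝ) := by
                  rw [Real.rpow_neg (by linarith : (0:ℝ) ≤ t₂ - x), ← Real.sqrt_eq_rpow,
                    hMdef]
                  field_simp
          have hF0 : 0 ≤ F x := hFnonneg x hxpos.le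
          have hB0 : (0:ℝ) ≤ M * (t₂ - x) ^ (-(1/2) : ℝ) := by
            apply mul_nonneg
            · rw [hMdef]; positivity
            · exact Real.rpow_nonneg (by linarith) _
          show ‖F x‖ ≤ ‖M * (t₂ - x) ^ (-(1/2) : ℝ)‖
          rw [Real.norm_eq_abs, Real.norm_eq_abs, abs_of_nonneg hF0, abs_of_nonneg hB0]
          exact hFx
    have hint3 : IntervalIntegrable F volume c₁' c₂' := by
      apply ContinuousOn.intervalIntegrable
      apply hFcont.mono
      rw [uIcc_of_le (le_trans hcmid hmidc)]
      intro x hx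
      exact ⟨lt_of_lt_of_le hac hx.1, lt_of_le_of_lt hx.2 hbc⟩
    exact (hint1.trans hint3).trans hint2
  -- the primitive G
  set G : ℝ → ℝ := fun s => ∫ t in t₁..s, F t with hGdef
  have hGa : G t₁ = 0 := integral_same
  have hsub : ∀ x ∈ Icc t₁ t₂, ∀ y ∈ Icc t₁ t₂, IntervalIntegrable F volume x y := by
    intro x hx y hy
    exact hFint.mono_set (uIcc_subset_uIcc (by rw [uIcc_of_le h12.le]; exact hx)
      (by rw [uIcc_of_le h12.le]; exact hy))
  have hGmono : StrictMonoOn G (Icc t₁ t₂) := by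
    intro x hx y hy hxy
    have hpos' : 0 < ∫ t in x..y, F t :=
      intervalIntegral_pos_of_pos_on (hsub x hx y hy)
        (fun t ht => hFpos t ⟨lt_of_le_of_lt hx.1 ht.1, lt_of_lt_of_le ht.2 hy.2⟩) hxy
    have hadd : (∫ t in t₁..x, F t) + ∫ t in x..y, F t = ∫ t in t₁..y, F t :=
      integral_add_adjacent_intervals (hsub t₁ (left_mem_Icc.mpr h12.le) x hx)
        (hsub x hx y hy)
    show G x < G y
    rw [hGdef]
    simp only []
    linarith
  have hL : 0 < G t₂ := by
    rw [hGdef]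
    exact intervalIntegral_pos_of_pos_on hFint (fun t ht => hFpos t ht) h12
  have hGcont : ContinuousOn G (Icc t₁ t₂) := by
    have h1 : IntegrableOn F (uIcc t₁ t₂) volume := by
      rw [uIcc_of_le h12.le]
      exact (intervalIntegrable_iff_integrableOn_Icc_of_le h12.le).mp hFint
    have h2 := continuousOn_primitive_interval (a := t₁) (b := t₂) (μ := volume) h1
    rw [uIcc_of_le h12.le] at h2
    exact h2
  have hGd : ∀ s ∈ Ioo t₁ t₂, HasDerivAt G (F s) s := by
    intro s hs
    exact intervalIntegral.integral_hasDerivAt_right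
      (hsub t₁ (left_mem_Icc.mpr h12.le) s ⟨hs.1.le, hs.2.le⟩)
      (hFcont.stronglyMeasurableAtFilter isOpen_Ioo s hs)
      (hFca s hs)
  have hGmem : ∀ s ∈ Icc t₁ t₂, G s ∈ Icc 0 (G t₂) := by
    intro s hs
    constructor
    · rw [← hGa]
      exact hGmono.monotoneOn (left_mem_Icc.mpr h12.le) hs hs.1
    · exact hGmono.monotoneOn hs (right_mem_Icc.mpr h12.le) hs.2
  -- the inverse function g₀
  obtain ⟨g₀, hg₀c, hg₀mem, hGg₀, hg₀G⟩ :
      ∃ g₀ : ℝ → ℝ, Continuous g₀ ∧ (∀ u, g₀ u ∈ Icc t₁ t₂) ∧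
        (∀ u ∈ Icc 0 (G t₂), G (g₀ u) = u) ∧ (∀ s ∈ Icc t₁ t₂, g₀ (G s) = s) := by
    have hL0 : (0:ℝ) ≤ G t₂ := hL.le
    set G' : Icc t₁ t₂ → Icc 0 (G t₂) := fun s => ⟨G s, hGmem s s.2⟩ with hG'
    have hG'c : Continuous G' := Continuous.subtype_mk (hGcont.restrict) _
    have hbij : Function.Bijective G' := by
      constructor
      · intro x y hxy
        exact Subtype.ext (hGmono.injOn x.2 y.2 (congrArg Subtype.val hxy))
      · rintro ⟨u, hu⟩
        have himg : Icc 0 (G t₂) ⊆ G '' Icc t₁ t₂ := by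
          have h3 := intermediate_value_Icc h12.le hGcont
          rwa [hGa] at h3
        obtain ⟨s, hs, hGs⟩ := himg hu
        exact ⟨⟨s, hs⟩, Subtype.ext hGs⟩
    haveI : CompactSpace (Icc t₁ t₂) := isCompact_iff_compactSpace.mp isCompact_Icc
    let e : Icc t₁ t₂ ≃ₜ Icc 0 (G t₂) :=
      Continuous.homeoOfEquivCompactToT2 (f := Equiv.ofBijective G' hbij) hG'c
    refine ⟨fun u => (e.symm (projIcc 0 (G t₂) hL0 u) : ℝ), ?_, ?_, ?_, ?_⟩
    · exact continuous_subtype_val.comp (e.symm.continuous.comp continuous_projIcc)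
    · exact fun u => (e.symm (projIcc 0 (G t₂) hL0 u)).2
    · intro u hu
      have h1 : projIcc 0 (G t₂) hL0 u = ⟨u, hu⟩ := projIcc_of_mem hL0 hu
      show G ((e.symm (projIcc 0 (G t₂) hL0 u) : ↑(Icc t₁ t₂)) : ℝ) = u
      rw [h1]
      have h3 := e.apply_symm_apply ⟨u, hu⟩
      calc G ((e.symm ⟨u, hu⟩ : Icc t₁ t₂) : ℝ) = (G' (e.symm ⟨u, hu⟩) : ℝ) := rfl
        _ = u := by rw [show G' (e.symm ⟨u, hu⟩) = e (e.symm ⟨u, hu⟩) from rfl, h3]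
    · intro s hs
      have h0 : G s ∈ Icc 0 (G t₂) := hGmem s hs
      have h1 : projIcc 0 (G t₂) hL0 (G s) = ⟨G s, h0⟩ := projIcc_of_mem hL0 h0
      show ((e.symm (projIcc 0 (G t₂) hL0 (G s)) : ↑(Icc t₁ t₂)) : ℝ) = s
      rw [h1]
      have h2 : (⟨G s, h0⟩ : Icc 0 (G t₂)) = e ⟨s, hs⟩ := rfl
      rw [h2, e.symm_apply_apply]
  have hg₀0 : g₀ 0 = t₁ := by
    rw [← hGa]; exact hg₀G t₁ (left_mem_Icc.mpr h12.le)
  have hg₀L : g₀ (G t₂) = t₂ := hg₀G t₂ (right_mem_Icc.mpr h12.le)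
  have hg₀mono : StrictMonoOn g₀ (Icc 0 (G t₂)) := by
    intro x hx y hy hxy
    by_contra hcon
    push_neg at hcon
    have h1 : G (g₀ y) ≤ G (g₀ x) := hGmono.monotoneOn (hg₀mem y) (hg₀mem x) hcon
    rw [hGg₀ x hx, hGg₀ y hy] at h1
    linarith
  have hg₀int : ∀ u ∈ Ioo 0 (G t₂), g₀ u ∈ Ioo t₁ t₂ := by
    intro u hu
    have h1 := hg₀mem u
    constructor
    · rcases eq_or_lt_of_le h1.1 with h | h
      · exfalso
        have h2 := hGg₀ u ⟨hu.1.le, hu.2.le⟩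
        rw [← h, hGa] at h2
        linarith [hu.1]
      · exact h
    · rcases eq_or_lt_of_le h1.2 with h | h
      · exfalso
        have h2 := hGg₀ u ⟨hu.1.le, hu.2.le⟩
        rw [h] at h2
        linarith [hu.2]
      · exact h
  have hg₀d : ∀ u ∈ Ioo 0 (G t₂), HasDerivAt g₀ ((F (g₀ u))⁻¹) u := by
    intro u hu
    have hx := hg₀int u hu
    have hF' : F (g₀ u) ≠ 0 := (hFpos _ hx).ne'
    refine HasDerivAt.of_local_left_inverse hg₀c.continuousAt (hGd _ hx) hF' ?_
    filter_upwards [Ioo_mem_nhds hu.1 hu.2] with y hy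
    exact hGg₀ y ⟨hy.1.le, hy.2.le⟩
  -- the triangle wave and the final function
  have hT0 : 0 < T := by
    have : T = 2 * G t₂ := by rw [hT, hGdef]
    linarith
  have hLT : G t₂ = T / 2 := by
    have : T = 2 * G t₂ := by rw [hT, hGdef]
    linarith
  set r : ℝ → ℝ := fun u => |u - T * round (u / T)| with hrdef
  set g : ℝ → ℝ := fun u => g₀ (r u) with hgdef2
  set d : ℝ → ℝ := fun u => Real.sign (u - T * round (u / T)) * (F (g u))⁻¹ with hddef
  have hround : ∀ (k : ℤ) (v : ℝ), T * k - T / 2 ≤ v → v < T * k + T / 2 →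
      round (v / T) = k := by
    intro k v h1 h2
    have h1' : ((k : ℝ) - 1 / 2) ≤ v / T := by
      rw [le_div_iff₀ hT0]
      nlinarith
    have h2' : v / T < (k : ℝ) + 1 / 2 := by
      rw [div_lt_iff₀ hT0]
      nlinarith
    rw [round_eq, Int.floor_eq_iff]
    constructor
    · linarith
    · push_cast; linarith
  have hsb : ∀ u : ℝ, -(T / 2) ≤ u - T * round (u / T) ∧ u - T * round (u / T) < T / 2 := by
    intro u
    have h1 : ((round (u / T) : ℝ)) ≤ u / T + 1 / 2 := by
      rw [round_eq]; exact_mod_cast Int.floor_le (u / T + 1 / 2)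
    have h2 : u / T + 1 / 2 < (round (u / T) : ℝ) + 1 := by
      rw [round_eq]; exact_mod_cast Int.lt_floor_add_one (u / T + 1 / 2)
    have h1' : T * (round (u / T) : ℝ) ≤ T * (u / T + 1 / 2) :=
      mul_le_mul_of_nonneg_left h1 hT0.le
    have h2' : T * (u / T + 1 / 2) < T * ((round (u / T) : ℝ) + 1) :=
      mul_lt_mul_of_pos_left h2 hT0
    have e1 : T * (u / T + 1 / 2) = u + T / 2 := by field_simp
    have e2 : T * ((round (u / T) : ℝ) + 1) = T * round (u / T) + T := by ring
    rw [e1] at h1' h2'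
    rw [e2] at h2'
    constructor <;> linarith
  have hrmem : ∀ u, r u ∈ Icc 0 (T / 2) := by
    intro u
    obtain ⟨h1, h2⟩ := hsb u
    exact ⟨abs_nonneg _, abs_le.mpr ⟨h1, h2.le⟩⟩
  have hrle : ∀ (u : ℝ) (k : ℤ), r u ≤ |u - T * k| := by
    intro u k
    have h := round_le (u / T) k
    have e : ∀ j : ℤ, u - T * j = T * (u / T - j) := by
      intro j; field_simp
    calc r u = |u - T * round (u / T)| := rfl
      _ = T * |u / T - round (u / T)| := by
          rw [e, abs_mul, abs_of_pos hT0]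
      _ ≤ T * |u / T - k| := mul_le_mul_of_nonneg_left h hT0.le
      _ = |u - T * k| := by rw [e, abs_mul, abs_of_pos hT0]
  have hrlip : ∀ u v : ℝ, r u - r v ≤ |u - v| := by
    intro u v
    have h1 : r u ≤ |u - T * round (v / T)| := hrle u _
    have h2 : |u - T * round (v / T)| ≤ |u - v| + |v - T * round (v / T)| :=
      abs_sub_le u v (T * round (v / T))
    have h3 : r v = |v - T * round (v / T)| := rfl
    linarith
  have hrc : Continuous r := by
    have hlip : LipschitzWith 1 r := by
      apply LipschitzWith.of_dist_le_mul
      intro u v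
      rw [Real.dist_eq, Real.dist_eq, NNReal.coe_one, one_mul, abs_sub_le_iff]
      exact ⟨hrlip u v, by rw [abs_sub_comm]; exact hrlip v u⟩
    exact hlip.continuous
  have hgc : Continuous g := by
    rw [hgdef2]; exact hg₀c.comp hrc
  have hgmem : ∀ u, g u ∈ Icc t₁ t₂ := fun u => hg₀mem (r u)
  have hgfold1 : ∀ u, u - T * round (u / T) = 0 → g u = t₁ := by
    intro u h
    have h1 : r u = 0 := by simp only [hrdef]; rw [h, abs_zero]
    show g₀ (r u) = t₁
    rw [h1, hg₀0]
  have hgfold2 : ∀ u, u - T * round (u / T) = -(T / 2) → g u = t₂ := by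
    intro u h
    have h1 : r u = T / 2 := by
      simp only [hrdef]; rw [h, abs_neg, abs_of_pos (by linarith)]
    show g₀ (r u) = t₂
    rw [h1, ← hLT, hg₀L]
  have hdfold : ∀ u, (u - T * round (u / T) = 0 ∨ u - T * round (u / T) = -(T / 2)) →
      d u = 0 := by
    intro u hcase
    rcases hcase with h | h
    · show Real.sign (u - T * round (u / T)) * (F (g u))⁻¹ = 0
      rw [h, Real.sign_zero, zero_mul]
    · have hgu := hgfold2 u h
      have hF0 : F (g u) = 0 := by
        rw [hgu, hFdef]
        show t₂ ^ (n - 1) / Real.sqrt (ξ t₂) = 0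
        rw [hz2, Real.sqrt_zero, div_zero]
      show Real.sign (u - T * round (u / T)) * (F (g u))⁻¹ = 0
      rw [hF0, inv_zero, mul_zero]
  -- case lemmas on the open half-periods
  have hpos_case : ∀ (u : ℝ) (k : ℤ), T * k < u → u < T * k + T / 2 →
      g u ∈ Ioo t₁ t₂ ∧ HasDerivAt g ((F (g u))⁻¹) u ∧ d u = (F (g u))⁻¹ := by
    intro u k h1 h2
    have hrd : round (u / T) = k := hround k u (by linarith) h2
    have hs : (0:ℝ) < u - T * k := by linarith
    have hrval : r u = u - T * k := by
      simp only [hrdef]; rw [hrd, abs_of_pos hs]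
    have hIooL : u - T * k ∈ Ioo 0 (G t₂) := by
      rw [hLT]; exact ⟨hs, by linarith⟩
    have hg₀x := hg₀int _ hIooL
    have hgu : g u = g₀ (u - T * k) := by
      show g₀ (r u) = g₀ (u - T * k)
      rw [hrval]
    refine ⟨by rw [hgu]; exact hg₀x, ?_, ?_⟩
    · have hd₀ := hg₀d _ hIooL
      have hcomp : HasDerivAt (fun v => g₀ (v - T * k)) ((F (g₀ (u - T * k)))⁻¹) u := by
        have h3 := hd₀.comp u ((hasDerivAt_id u).sub_const (T * k))
        simpa [Function.comp_def] using h3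
      have hev : g =ᶠ[𝓝 u] fun v => g₀ (v - T * k) := by
        filter_upwards [Ioo_mem_nhds (show T * (k:ℝ) < u from h1) h2] with v hv
        have hrdv : round (v / T) = k := hround k v (by linarith [hv.1]) hv.2
        show g₀ (r v) = g₀ (v - T * k)
        have : r v = v - T * k := by
          simp only [hrdef]; rw [hrdv, abs_of_pos (by linarith [hv.1] : (0:ℝ) < v - T * k)]
        rw [this]
      have h4 := hcomp.congr_of_eventuallyEq hev
      rw [hgu]
      exact h4
    · show Real.sign (u - T * round (u / T)) * (F (g u))⁻¹ = (F (g u))⁻¹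
      rw [hrd, Real.sign_of_pos hs, one_mul]
  have hneg_case : ∀ (u : ℝ) (k : ℤ), T * k - T / 2 < u → u < T * k →
      g u ∈ Ioo t₁ t₂ ∧ HasDerivAt g (-(F (g u))⁻¹) u ∧ d u = -(F (g u))⁻¹ := by
    intro u k h1 h2
    have hrd : round (u / T) = k := hround k u h1.le (by linarith)
    have hs : u - T * k < 0 := by linarith
    have hrval : r u = T * k - u := by
      simp only [hrdef]; rw [hrd, abs_of_neg hs]; ring
    have hIooL : T * k - u ∈ Ioo 0 (G t₂) := by
      rw [hLT]; exact ⟨by linarith, by linarith⟩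
    have hg₀x := hg₀int _ hIooL
    have hgu : g u = g₀ (T * k - u) := by
      show g₀ (r u) = g₀ (T * k - u)
      rw [hrval]
    refine ⟨by rw [hgu]; exact hg₀x, ?_, ?_⟩
    · have hd₀ := hg₀d _ hIooL
      have hcomp : HasDerivAt (fun v => g₀ (T * k - v)) (-(F (g₀ (T * k - u)))⁻¹) u := by
        have h3 := hd₀.comp u ((hasDerivAt_id u).const_sub (T * k))
        simpa [Function.comp_def] using h3
      have hev : g =ᶠ[𝓝 u] fun v => g₀ (T * k - v) := by
        filter_upwards [Ioo_mem_nhds (show T * (k:ℝ) - T / 2 < u from h1) h2] with v hv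
        have hrdv : round (v / T) = k := hround k v (by linarith [hv.1]) (by linarith [hv.2])
        show g₀ (r v) = g₀ (T * k - v)
        have : r v = T * k - v := by
          simp only [hrdef]; rw [hrdv, abs_of_neg (by linarith [hv.2] : v - T * k < 0)]; ring
        rw [this]
      have h4 := hcomp.congr_of_eventuallyEq hev
      rw [hgu]
      exact h4
    · show Real.sign (u - T * round (u / T)) * (F (g u))⁻¹ = -(F (g u))⁻¹
      rw [hrd, Real.sign_of_neg hs, neg_one_mul]
  -- continuity of d
  have hbound : ∀ v, |d v| ≤ Real.sqrt (ξ (g v)) / t₁ ^ (n - 1) := by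
    intro v
    have hgv := hgmem v
    have hgpos : 0 < g v := lt_of_lt_of_le ht₁ hgv.1
    have h2 : (F (g v))⁻¹ = Real.sqrt (ξ (g v)) / (g v) ^ (n - 1) := by
      rw [hFdef]
      show ((g v) ^ (n - 1) / Real.sqrt (ξ (g v)))⁻¹ = _
      rw [inv_div]
    have h1 : |d v| ≤ |(F (g v))⁻¹| := by
      show |Real.sign (v - T * round (v / T)) * (F (g v))⁻¹| ≤ _
      rw [abs_mul]
      have hsle : |Real.sign (v - T * round (v / T))| ≤ 1 := by
        rcases lt_trichotomy (v - T * round (v / T)) 0 with h | h | h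
        · rw [Real.sign_of_neg h]; norm_num
        · rw [h, Real.sign_zero]; norm_num
        · rw [Real.sign_of_pos h]; norm_num
      calc |Real.sign (v - T * round (v / T))| * |(F (g v))⁻¹|
          ≤ 1 * |(F (g v))⁻¹| := mul_le_mul_of_nonneg_right hsle (abs_nonneg _)
        _ = |(F (g v))⁻¹| := one_mul _
    have h3 : |(F (g v))⁻¹| = Real.sqrt (ξ (g v)) / (g v) ^ (n - 1) := by
      rw [h2, abs_of_nonneg (div_nonneg (Real.sqrt_nonneg _) (pow_nonneg hgpos.le _))]
    rw [h3] at h1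
    have h4 : Real.sqrt (ξ (g v)) / (g v) ^ (n - 1) ≤ Real.sqrt (ξ (g v)) / t₁ ^ (n - 1) :=
      div_le_div_of_nonneg_left (Real.sqrt_nonneg _) (pow_pos ht₁ _)
        (pow_le_pow_left₀ ht₁.le hgv.1 _)
    linarith
  have hψc : Continuous fun v => Real.sqrt (ξ (g v)) / t₁ ^ (n - 1) :=
    (Real.continuous_sqrt.comp (hξc.comp hgc)).div_const _
  have hsqueeze : ∀ u, ξ (g u) = 0 → d u = 0 → ContinuousAt d u := by
    intro u hξ0 hd0
    have hval : Real.sqrt (ξ (g u)) / t₁ ^ (n - 1) = 0 := by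
      rw [hξ0, Real.sqrt_zero, zero_div]
    have ht : Tendsto (fun v => Real.sqrt (ξ (g v)) / t₁ ^ (n - 1)) (𝓝 u) (𝓝 0) := by
      rw [← hval]; exact hψc.continuousAt
    rw [ContinuousAt, hd0]
    exact squeeze_zero_norm (fun v => by rw [Real.norm_eq_abs]; exact hbound v) ht
  have hdc : Continuous d := by
    rw [continuous_iff_continuousAt]
    intro u
    obtain ⟨hs1, hs2⟩ := hsb u
    rcases lt_trichotomy (u - T * round (u / T)) 0 with hneg | hzero | hposs
    · rcases eq_or_lt_of_le hs1 with hfold' | hreg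
      · exact hsqueeze u (by rw [hgfold2 u hfold'.symm, hz2]) (hdfold u (Or.inr hfold'.symm))
      · obtain ⟨hgIoo, _, hdu⟩ := hneg_case u (round (u / T)) (by linarith) (by linarith)
        have hFgc : ContinuousAt (fun v => -(F (g v))⁻¹) u := by
          apply ContinuousAt.neg
          apply ContinuousAt.inv₀
          · exact (hFca _ hgIoo).comp hgc.continuousAt
          · exact (hFpos _ hgIoo).ne'
        apply hFgc.congr
        filter_upwards [Ioo_mem_nhds (show T * (round (u/T) : ℝ) - T / 2 < u by linarith)
          (show u < T * (round (u/T) : ℝ) by linarith)] with v hv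
        exact ((hneg_case v (round (u / T)) hv.1 hv.2).2.2).symm
    · exact hsqueeze u (by rw [hgfold1 u hzero, hz1]) (hdfold u (Or.inl hzero))
    · obtain ⟨hgIoo, _, hdu⟩ := hpos_case u (round (u / T)) (by linarith) (by linarith)
      have hFgc : ContinuousAt (fun v => (F (g v))⁻¹) u := by
        apply ContinuousAt.inv₀
        · exact (hFca _ hgIoo).comp hgc.continuousAt
        · exact (hFpos _ hgIoo).ne'
      apply hFgc.congr
      filter_upwards [Ioo_mem_nhds (show T * (round (u/T) : ℝ) < u by linarith)
        (show u < T * (round (u/T) : ℝ) + T / 2 by linarith)] with v hv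
      exact ((hpos_case v (round (u / T)) hv.1 hv.2).2.2).symm
  -- derivative at the fold points
  have hfold : ∀ u : ℝ,
      (u - T * round (u / T) = 0 ∨ u - T * round (u / T) = -(T / 2)) →
      HasDerivAt g 0 u := by
    intro u hcase
    have hdu0 : d u = 0 := hdfold u hcase
    have hright : ∀ v ∈ Ioo u (u + T / 2), HasDerivAt g (d v) v := by
      intro v hv
      rcases hcase with h0 | hhalf
      · obtain ⟨_, hd, he⟩ := hpos_case v (round (u / T))
          (by linarith [hv.1]) (by linarith [hv.2])
        rw [he]; exact hd
      · obtain ⟨_, hd, he⟩ := hneg_case v (round (u / T))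
          (by linarith [hv.1]) (by linarith [hv.2])
        rw [he]; exact hd
    have hleft : ∀ v ∈ Ioo (u - T / 2) u, HasDerivAt g (d v) v := by
      intro v hv
      rcases hcase with h0 | hhalf
      · obtain ⟨_, hd, he⟩ := hneg_case v (round (u / T))
          (by linarith [hv.1]) (by linarith [hv.2])
        rw [he]; exact hd
      · obtain ⟨_, hd, he⟩ := hpos_case v (round (u / T) - 1)
          (by push_cast; linarith [hv.1]) (by push_cast; linarith [hv.2])
        rw [he]; exact hd
    have htd : Tendsto d (𝓝 u) (𝓝 0) := by
      have h5 := hdc.continuousAt (x := u)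
      rwa [ContinuousAt, hdu0] at h5
    have hIci : HasDerivWithinAt g 0 (Ici u) u := by
      apply hasDerivWithinAt_Ici_of_tendsto_deriv (s := Ioo u (u + T / 2))
      · intro v hv
        exact ((hright v hv).differentiableAt).differentiableWithinAt
      · exact hgc.continuousWithinAt
      · exact Ioo_mem_nhdsGT_of_mem ⟨le_rfl, by linarith⟩
      · apply Tendsto.congr' ?_ (htd.mono_left nhdsWithin_le_nhds)
        filter_upwards [Ioo_mem_nhdsGT_of_mem
          (show u ∈ Ico u (u + T / 2) from ⟨le_rfl, by linarith⟩)] with v hv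
        exact ((hright v hv).deriv).symm
    have hIic : HasDerivWithinAt g 0 (Iic u) u := by
      apply hasDerivWithinAt_Iic_of_tendsto_deriv (s := Ioo (u - T / 2) u)
      · intro v hv
        exact ((hleft v hv).differentiableAt).differentiableWithinAt
      · exact hgc.continuousWithinAt
      · exact Ioo_mem_nhdsLT_of_mem ⟨by linarith, le_rfl⟩
      · apply Tendsto.congr' ?_ (htd.mono_left nhdsWithin_le_nhds)
        filter_upwards [Ioo_mem_nhdsLT_of_mem
          (show u ∈ Ioc (u - T / 2) u from ⟨by linarith, le_rfl⟩)] with v hv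
        exact ((hleft v hv).deriv).symm
    have hu2 := hIci.union hIic
    rw [Set.union_comm, Set.Iic_union_Ici] at hu2
    exact hasDerivWithinAt_univ.mp hu2
  -- the global derivative
  have hgd : ∀ u, HasDerivAt g (d u) u := by
    intro u
    obtain ⟨hs1, hs2⟩ := hsb u
    rcases lt_trichotomy (u - T * round (u / T)) 0 with hneg | hzero | hposs
    · rcases eq_or_lt_of_le hs1 with hfold' | hreg
      · rw [hdfold u (Or.inr hfold'.symm)]
        exact hfold u (Or.inr hfold'.symm)
      · obtain ⟨_, hd, he⟩ := hneg_case u (round (u / T)) (by linarith) (by linarith)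
        rw [he]; exact hd
    · rw [hdfold u (Or.inl hzero)]
      exact hfold u (Or.inl hzero)
    · obtain ⟨_, hd, he⟩ := hpos_case u (round (u / T)) (by linarith) (by linarith)
      rw [he]; exact hd
  have hderiv : deriv g = d := funext fun u => (hgd u).deriv
  have hcd : ContDiff ℝ 1 g := contDiff_one_iff_deriv.mpr
    ⟨fun u => (hgd u).differentiableAt, by rw [hderiv]; exact hdc⟩
  -- periodicity
  have hper : Function.Periodic g T := by
    intro u
    have hr : r (u + T) = r u := by
      simp only [hrdef]
      have h1 : (u + T) / T = u / T + 1 := by field_simp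
      rw [h1, round_add_one]
      have h2 : u + T - T * ((round (u / T) + 1 : ℤ) : ℝ) = u - T * ((round (u / T) : ℤ) : ℝ) := by
        push_cast; ring
      rw [h2]
    show g₀ (r (u + T)) = g₀ (r u)
    rw [hr]
  -- values and monotonicity
  have hr0 : r 0 = 0 := by
    simp only [hrdef]
    norm_num
  have hg0 : g 0 = t₁ := by
    show g₀ (r 0) = t₁
    rw [hr0, hg₀0]
  have hrid : ∀ u ∈ Icc 0 (T / 2), r u = u := by
    intro u hu
    rcases eq_or_lt_of_le hu.2 with heq | hlt
    · have hrd : round (u / T) = 1 := by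
        apply hround 1 u
        · push_cast; linarith
        · push_cast; linarith
      simp only [hrdef]
      rw [hrd]
      push_cast
      rw [abs_of_nonpos (by linarith : u - T * 1 ≤ 0)]
      linarith
    · have hrd : round (u / T) = 0 := by
        apply hround 0 u
        · push_cast; linarith [hu.1]
        · push_cast; linarith
      simp only [hrdef]
      rw [hrd]
      push_cast
      rw [mul_zero, sub_zero, abs_of_nonneg hu.1]
  have hgT2 : g (T / 2) = t₂ := by
    show g₀ (r (T / 2)) = t₂
    rw [hrid (T / 2) ⟨by linarith, le_rfl⟩, ← hLT, hg₀L]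
  have hmono : StrictMonoOn g (Icc 0 (T / 2)) := by
    intro x hx y hy hxy
    show g₀ (r x) < g₀ (r y)
    rw [hrid x hx, hrid y hy]
    exact hg₀mono (by rw [hLT]; exact hx) (by rw [hLT]; exact hy) hxy
  -- conclusion
  refine ⟨g, hcd, hper, hgmem, hg0, hgT2, hmono, ?_⟩
  intro u
  have hgu := hgmem u
  have hx0 : 0 < g u := lt_of_lt_of_le ht₁ hgu.1
  have hxne : g u ≠ 0 := hx0.ne'
  have hkey : (deriv g u) ^ 2 = ξ (g u) / (g u) ^ (2 * n - 2) := by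
    rw [hderiv]
    rcases eq_or_lt_of_le (hξnn _ hgu) with h0 | hpos' 
    · have hF0 : F (g u) = 0 := by
        rw [hFdef]
        show (g u) ^ (n - 1) / Real.sqrt (ξ (g u)) = 0
        rw [← h0, Real.sqrt_zero, div_zero]
      show (Real.sign (u - T * round (u / T)) * (F (g u))⁻¹) ^ 2 = _
      rw [hF0, inv_zero, mul_zero, ← h0]
      norm_num
    · have hsne : u - T * round (u / T) ≠ 0 := by
        intro hcon
        have h5 : g u = t₁ := hgfold1 u hcon
        rw [h5, hz1] at hpos'
        exact lt_irrefl 0 hpos'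
      have hsgn : (Real.sign (u - T * round (u / T))) ^ 2 = 1 := by
        rcases lt_or_gt_of_ne hsne with h | h
        · rw [Real.sign_of_neg h]; norm_num
        · rw [Real.sign_of_pos h]; norm_num
      have hFinv : (F (g u))⁻¹ = Real.sqrt (ξ (g u)) / (g u) ^ (n - 1) := by
        rw [hFdef]
        show ((g u) ^ (n - 1) / Real.sqrt (ξ (g u)))⁻¹ = _
        rw [inv_div]
      show (Real.sign (u - T * round (u / T)) * (F (g u))⁻¹) ^ 2 = _
      rw [mul_pow, hsgn, one_mul, hFinv, div_pow, Real.sq_sqrt hpos'.le, ← pow_mul]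
      congr 2
      omega
  obtain ⟨m, hm⟩ : ∃ m, n = m + 2 := ⟨n - 2, by omega⟩
  subst hm
  rw [hkey, hξ]
  simp only []
  have hz1' : (g u) ^ ((2:ℤ) - 2 * ((m + 2 : ℕ) : ℤ)) = ((g u) ^ (2 * m + 2))⁻¹ := by
    rw [show ((2:ℤ) - 2 * ((m + 2 : ℕ) : ℤ)) = -((2 * m + 2 : ℕ) : ℤ) by push_cast; ring,
      zpow_neg, zpow_natCast]
  have hz2' : (g u) ^ ((2:ℤ) - ((m + 2 : ℕ) : ℤ)) = ((g u) ^ m)⁻¹ := by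
    rw [show ((2:ℤ) - ((m + 2 : ℕ) : ℤ)) = -((m : ℕ) : ℤ) by push_cast; ring,
      zpow_neg, zpow_natCast]
  rw [hz1', hz2', show 2 * (m + 2) - 2 = 2 * m + 2 from by omega]
  have hpow : (g u) ^ (2 * m + 2) ≠ 0 := pow_ne_zero _ hxne
  have hpow2 : (g u) ^ m ≠ 0 := pow_ne_zero _ hxne
  field_simp
  ring
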